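/- Let {X_n} satisfy AIM(x_n) with separation sequence q_n and mixing coefficients α_n, suppose n·F̄(x_n) → τ > 0 as n → ∞, and let (p_n) be positive integers with p_n = o(n), n·α_n = o(p_n) and q_n = o(p_n). Then liminf_{n→∞} [ P(M_n ≤ x_n) − exp{−∑_{j=1}^{n} P(X_j > x_n, M_{j,j+p_n} ≤ x_n)} ] ≥ 0, i.e. P(M_n ≤ x_n) ≥ exp{−∑_{j=1}^{n} P(X_j > x_n, M_{j,j+p_n} ≤ x_n)} + o(1). -/

import Mathlib

open MeasureTheory Filter Finset Asymptotics

/-- Probability of an event as a real number. -/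
noncomputable def pr {Ω : Type*} [MeasurableSpace Ω] (P : Measure Ω) (A : Set Ω) : ℝ :=
  (P A).toReal

/-- The event that `X i ≤ x` for every index `i` in the set `S`;
this is the event `{M(S) ≤ x}` where `M(S) = max {X i : i ∈ S}`. -/
def allLe {Ω : Type*} (X : ℕ → Ω → ℝ) (S : Set ℕ) (x : ℝ) : Set Ω :=
  {ω | ∀ i ∈ S, X i ω ≤ x}

/-- `α` is a sequence of AIM mixing coefficients for `X` relative to thresholds `xs`
with separation sequence `q`: for any two intervals `I₁ = [a,b]`, `I₂ = [b+qₙ+1, c]`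
contained in `{1,…,n}`, separated by `qₙ`, each of cardinality at least `qₙ`,
the maximum-based discrepancy is bounded by `α n`. -/
def AIMBound {Ω : Type*} [MeasurableSpace Ω] (P : Measure Ω) (X : ℕ → Ω → ℝ)
    (xs : ℕ → ℝ) (q : ℕ → ℕ) (α : ℕ → ℝ) : Prop :=
  ∀ n a b c : ℕ, 1 ≤ a → a ≤ b → b + q n + 1 ≤ c → c ≤ n →
    q n ≤ b + 1 - a → q n ≤ c - (b + q n) →
    |pr P (allLe X (Set.Icc a b ∪ Set.Icc (b + q n + 1) c) (xs n)) -
      pr P (allLe X (Set.Icc a b) (xs n)) *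
        pr P (allLe X (Set.Icc (b + q n + 1) c) (xs n))| ≤ α n

section PrLemmas
set_option linter.unusedSectionVars false
variable {Ω : Type*} [MeasurableSpace Ω] (P : Measure Ω) [IsProbabilityMeasure P]

lemma pr_nonneg (A : Set Ω) : 0 ≤ pr P A := ENNReal.toReal_nonneg

lemma pr_le_one (A : Set Ω) : pr P A ≤ 1 := by
  have := prob_le_one (μ := P) (s := A)
  simpa [pr] using ENNReal.toReal_mono ENNReal.one_ne_top this

lemma pr_mono {A B : Set Ω} (h : A ⊆ B) : pr P A ≤ pr P B :=
  ENNReal.toReal_mono (measure_ne_top P B) (measure_mono h)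

lemma pr_compl {A : Set Ω} (hA : MeasurableSet A) : pr P Aᶜ = 1 - pr P A := by
  have h := prob_compl_eq_one_sub hA (μ := P)
  rw [pr, h, ENNReal.toReal_sub_of_le (prob_le_one) ENNReal.one_ne_top]
  simp [pr]

lemma pr_biUnion_le {ι : Type*} (s : Finset ι) (A : ι → Set Ω) :
    pr P (⋃ i ∈ s, A i) ≤ ∑ i ∈ s, pr P (A i) := by
  have h1 : P (⋃ i ∈ s, A i) ≤ ∑ i ∈ s, P (A i) := measure_biUnion_finset_le s A
  have h2 : ∑ i ∈ s, P (A i) ≠ ⊤ := by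
    exact (ENNReal.sum_lt_top.2 fun i _ => measure_lt_top P (A i)).ne
  calc pr P (⋃ i ∈ s, A i) ≤ (∑ i ∈ s, P (A i)).toReal := ENNReal.toReal_mono h2 h1
    _ = ∑ i ∈ s, pr P (A i) := ENNReal.toReal_sum fun i _ => measure_ne_top P (A i)

lemma pr_inter_ge {A B : Set Ω} : pr P A - pr P Bᶜ ≤ pr P (A ∩ B) := by
  have hsub : A ⊆ (A ∩ B) ∪ Bᶜ := by
    intro ω hω
    by_cases h : ω ∈ B
    · exact Or.inl ⟨hω, h⟩
    · exact Or.inr h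
  have h1 : P A ≤ P (A ∩ B) + P Bᶜ :=
    (measure_mono hsub).trans (measure_union_le _ _)
  have h2 : pr P A ≤ pr P (A ∩ B) + pr P Bᶜ := by
    have h3 : (P A).toReal ≤ (P (A ∩ B) + P Bᶜ).toReal := ENNReal.toReal_mono
        (by exact (ENNReal.add_lt_top.2 ⟨measure_lt_top _ _, measure_lt_top _ _⟩).ne) h1
    rw [ENNReal.toReal_add (measure_ne_top _ _) (measure_ne_top _ _)] at h3
    exact h3
  linarith

end PrLemmas

section AllLe
variable {Ω : Type*} (X : ℕ → Ω → ℝ)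

lemma allLe_union (S T : Set ℕ) (x : ℝ) :
    allLe X (S ∪ T) x = allLe X S x ∩ allLe X T x := by
  ext ω; simp [allLe, or_imp, forall_and]

lemma allLe_anti {S T : Set ℕ} (h : S ⊆ T) (x : ℝ) : allLe X T x ⊆ allLe X S x :=
  fun ω hω i hi => hω i (h hi)

lemma allLe_measurable [MeasurableSpace Ω] (hmeas : ∀ i, Measurable (X i)) (S : Set ℕ) (x : ℝ) :
    MeasurableSet (allLe X S x) := by
  have : allLe X S x = ⋂ i ∈ S, {ω | X i ω ≤ x} := by
    ext ω; simp [allLe]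
  rw [this]
  exact MeasurableSet.biInter (S.to_countable) fun i _ =>
    measurableSet_le (hmeas i) measurable_const

end AllLe

section Exceed
set_option linter.unusedSectionVars false
variable {Ω : Type*} [MeasurableSpace Ω] (P : Measure Ω) [IsProbabilityMeasure P]
variable (X : ℕ → Ω → ℝ)

lemma pr_exceed (hmeas : ∀ i, Measurable (X i)) (j : ℕ) (x : ℝ) :
    pr P {ω | x < X j ω} = 1 - pr P {ω | X j ω ≤ x} := by
  have h : {ω | x < X j ω} = {ω | X j ω ≤ x}ᶜ := by
    ext ω; simp [not_le]
  rw [h, pr_compl P (measurableSet_le (hmeas j) measurable_const)]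

/-- Last exceedance decomposition (inequality form). -/
lemma last_exceed (hmeas : ∀ i, Measurable (X i)) (a b : ℕ) (x : ℝ) :
    1 - ∑ j ∈ Finset.Icc a b,
        pr P ({ω | x < X j ω} ∩ allLe X (Set.Icc (j + 1) b) x)
      ≤ pr P (allLe X (Set.Icc a b) x) := by
  set A := allLe X (Set.Icc a b) x with hA
  have hsub : Aᶜ ⊆ ⋃ j ∈ Finset.Icc a b,
      ({ω | x < X j ω} ∩ allLe X (Set.Icc (j + 1) b) x) := by
    intro ω hω
    have h1 : ∃ i ∈ Set.Icc a b, ¬ X i ω ≤ x := by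
      by_contra h
      push_neg at h
      exact hω fun i hi => h i hi
    -- take the largest exceedance index
    have hT : (Finset.filter (fun i => x < X i ω) (Finset.Icc a b)).Nonempty := by
      obtain ⟨i, hi, hxi⟩ := h1
      exact ⟨i, Finset.mem_filter.2 ⟨Finset.mem_Icc.2 ⟨hi.1, hi.2⟩, lt_of_not_ge hxi⟩⟩
    set T := Finset.filter (fun i => x < X i ω) (Finset.Icc a b)
    set j := T.max' hT
    have hjT : j ∈ T := T.max'_mem hT
    have hj1 : j ∈ Finset.Icc a b := (Finset.mem_filter.1 hjT).1
    have hj2 : x < X j ω := (Finset.mem_filter.1 hjT).2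
    refine Set.mem_biUnion hj1 ⟨hj2, ?_⟩
    intro i hi
    by_contra hxi
    have hiT : i ∈ T := Finset.mem_filter.2
      ⟨Finset.mem_Icc.2 ⟨le_trans (Finset.mem_Icc.1 hj1).1 (le_trans (Nat.le_succ j) hi.1), hi.2⟩,
        lt_of_not_ge hxi⟩
    have h5 := T.le_max' i hiT
    have h6 : j + 1 ≤ i := hi.1
    omega
  have h2 : pr P Aᶜ ≤ ∑ j ∈ Finset.Icc a b,
      pr P ({ω | x < X j ω} ∩ allLe X (Set.Icc (j + 1) b) x) :=
    (pr_mono P hsub).trans (pr_biUnion_le P _ _)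
  have h3 : pr P Aᶜ = 1 - pr P A := pr_compl P (allLe_measurable X hmeas _ _)
  linarith

end Exceed

section Main
set_option linter.unusedSectionVars false
variable {Ω : Type*} [MeasurableSpace Ω] (P : Measure Ω) [IsProbabilityMeasure P]
variable (X : ℕ → Ω → ℝ)

lemma compl_allLe_le (hmeas : ∀ i, Measurable (X i)) {x Fx : ℝ}
    (hFx : ∀ i, 1 ≤ i → pr P {ω | X i ω ≤ x} = Fx) (a b : ℕ) (ha : 1 ≤ a) :
    pr P (allLe X (Set.Icc a b) x)ᶜ ≤ (b + 1 - a : ℕ) * (1 - Fx) := by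
  have hsub : (allLe X (Set.Icc a b) x)ᶜ ⊆ ⋃ j ∈ Finset.Icc a b, {ω | x < X j ω} := by
    intro ω hω
    simp only [allLe, Set.mem_compl_iff, Set.mem_setOf_eq, not_forall] at hω
    obtain ⟨j, hj, hxj⟩ := hω
    exact Set.mem_biUnion (Finset.mem_Icc.2 ⟨hj.1, hj.2⟩) (lt_of_not_ge hxj)
  calc pr P (allLe X (Set.Icc a b) x)ᶜ
      ≤ ∑ j ∈ Finset.Icc a b, pr P {ω | x < X j ω} := (pr_mono P hsub).trans (pr_biUnion_le P _ _)
    _ = ∑ j ∈ Finset.Icc a b, (1 - Fx) := by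
        refine Finset.sum_congr rfl fun j hj => ?_
        rw [pr_exceed P X hmeas j x, hFx j (le_trans ha (Finset.mem_Icc.1 hj).1)]
    _ = (b + 1 - a : ℕ) * (1 - Fx) := by rw [Finset.sum_const, Nat.card_Icc]; simp

lemma peel_step (hmeas : ∀ i, Measurable (X i)) {x Fx : ℝ}
    (hFx : ∀ i, 1 ≤ i → pr P {ω | X i ω ≤ x} = Fx)
    (n r qn : ℕ) (αn : ℝ)
    (hbd' : ∀ a b c : ℕ, 1 ≤ a → a ≤ b → b + qn + 1 ≤ c → c ≤ n →
      qn ≤ b + 1 - a → qn ≤ c - (b + qn) →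
      |pr P (allLe X (Set.Icc a b ∪ Set.Icc (b + qn + 1) c) x) -
        pr P (allLe X (Set.Icc a b) x) * pr P (allLe X (Set.Icc (b + qn + 1) c) x)| ≤ αn)
    (hq1 : 1 ≤ qn) (h2q : 2 * qn ≤ r) (m : ℕ) (hmn : (m + 1) * r + r ≤ n) :
    pr P (allLe X (Set.Icc (m * r + 1) ((m + 1) * r - qn)) x) *
        pr P (allLe X (Set.Icc ((m + 1) * r + 1) n) x) - (αn + qn * (1 - Fx))
      ≤ pr P (allLe X (Set.Icc (m * r + 1) n) x) := by
  have hmul : (m + 1) * r = m * r + r := by ring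
  set a := m * r + 1 with hadef
  set b := (m + 1) * r - qn with hbdef
  have hbq : b + qn = (m + 1) * r := by omega
  have hab : a ≤ b := by omega
  have hcn : b + qn + 1 ≤ n := by omega
  have hs1 : qn ≤ b + 1 - a := by omega
  have hs2 : qn ≤ n - (b + qn) := by omega
  have ha1 : 1 ≤ a := by omega
  -- split the interval
  have hsplit : Set.Icc a n = (Set.Icc a b ∪ Set.Icc (b + qn + 1) n) ∪ Set.Icc (b + 1) (b + qn) := by
    ext j
    simp only [Set.mem_Icc, Set.mem_union]
    omega
  have hEq : allLe X (Set.Icc a n) x =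
      allLe X (Set.Icc a b ∪ Set.Icc (b + qn + 1) n) x ∩ allLe X (Set.Icc (b + 1) (b + qn)) x := by
    rw [hsplit, allLe_union]
  have h1 : pr P (allLe X (Set.Icc a b ∪ Set.Icc (b + qn + 1) n) x) -
      pr P (allLe X (Set.Icc (b + 1) (b + qn)) x)ᶜ ≤ pr P (allLe X (Set.Icc a n) x) := by
    rw [hEq]; exact pr_inter_ge P
  have h2 : pr P (allLe X (Set.Icc (b + 1) (b + qn)) x)ᶜ ≤ qn * (1 - Fx) := by
    have := compl_allLe_le P X hmeas hFx (b + 1) (b + qn) (by omega)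
    have hc : (b + qn + 1 - (b + 1) : ℕ) = qn := by omega
    rw [hc] at this
    exact this
  have h3 := hbd' a b n ha1 hab hcn le_rfl hs1 hs2
  have h4 : pr P (allLe X (Set.Icc a b) x) * pr P (allLe X (Set.Icc (b + qn + 1) n) x) - αn
      ≤ pr P (allLe X (Set.Icc a b ∪ Set.Icc (b + qn + 1) n) x) := by
    have := abs_le.1 h3
    linarith [this.1]
  have hbq1 : b + qn + 1 = (m + 1) * r + 1 := by omega
  rw [hbq1] at h4 h1
  linarith

lemma block_lower (hmeas : ∀ i, Measurable (X i)) {x Fx : ℝ}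
    (hFx : ∀ i, 1 ≤ i → pr P {ω | X i ω ≤ x} = Fx)
    (pn : ℕ) (a b : ℕ) (ha : 1 ≤ a) :
    1 - ((∑ j ∈ Finset.Icc a b,
        pr P ({ω | x < X j ω} ∩ allLe X (Set.Icc (j + 1) (j + pn)) x)) + pn * (1 - Fx))
      ≤ pr P (allLe X (Set.Icc a b) x) := by
  have hFb : 0 ≤ 1 - Fx := by
    have := pr_le_one P {ω | X 1 ω ≤ x}
    rw [hFx 1 le_rfl] at this
    linarith
  set t : ℕ → ℝ := fun j => pr P ({ω | x < X j ω} ∩ allLe X (Set.Icc (j + 1) (j + pn)) x)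
  set u : ℕ → ℝ := fun j => pr P ({ω | x < X j ω} ∩ allLe X (Set.Icc (j + 1) b) x)
  have hle := last_exceed P X hmeas a b x
  have hsum : ∑ j ∈ Finset.Icc a b, u j ≤ (∑ j ∈ Finset.Icc a b, t j) + pn * (1 - Fx) := by
    rw [← Finset.sum_filter_add_sum_filter_not (Finset.Icc a b) (fun j => j + pn ≤ b)]
    have hb1 : ∑ j ∈ Finset.filter (fun j => j + pn ≤ b) (Finset.Icc a b), u j
        ≤ ∑ j ∈ Finset.filter (fun j => j + pn ≤ b) (Finset.Icc a b), t j := by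
      refine Finset.sum_le_sum fun j hj => ?_
      have hjb : j + pn ≤ b := (Finset.mem_filter.1 hj).2
      refine pr_mono P (Set.inter_subset_inter_right _ (allLe_anti X ?_ x))
      exact Set.Icc_subset_Icc le_rfl hjb
    have hb1' : ∑ j ∈ Finset.filter (fun j => j + pn ≤ b) (Finset.Icc a b), t j
        ≤ ∑ j ∈ Finset.Icc a b, t j :=
      Finset.sum_le_sum_of_subset_of_nonneg (Finset.filter_subset _ _)
        (fun j _ _ => pr_nonneg P _)
    have hb2 : ∑ j ∈ Finset.filter (fun j => ¬ j + pn ≤ b) (Finset.Icc a b), u j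
        ≤ pn * (1 - Fx) := by
      have hcard : (Finset.filter (fun j => ¬ j + pn ≤ b) (Finset.Icc a b)).card ≤ pn := by
        have hsub : Finset.filter (fun j => ¬ j + pn ≤ b) (Finset.Icc a b)
            ⊆ Finset.Icc (b + 1 - pn) b := by
          intro j hj
          have h1 := Finset.mem_Icc.1 (Finset.mem_filter.1 hj).1
          have h2 := (Finset.mem_filter.1 hj).2
          exact Finset.mem_Icc.2 (by omega)
        calc _ ≤ (Finset.Icc (b + 1 - pn) b).card := Finset.card_le_card hsub
          _ ≤ pn := by rw [Nat.card_Icc]; omega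
      have hterm : ∀ j ∈ Finset.filter (fun j => ¬ j + pn ≤ b) (Finset.Icc a b),
          u j ≤ 1 - Fx := by
        intro j hj
        have hj1 : 1 ≤ j := le_trans ha (Finset.mem_Icc.1 (Finset.mem_filter.1 hj).1).1
        calc u j ≤ pr P {ω | x < X j ω} := pr_mono P Set.inter_subset_left
          _ = 1 - Fx := by rw [pr_exceed P X hmeas j x, hFx j hj1]
      calc ∑ j ∈ Finset.filter (fun j => ¬ j + pn ≤ b) (Finset.Icc a b), u j
          ≤ ∑ j ∈ Finset.filter (fun j => ¬ j + pn ≤ b) (Finset.Icc a b), (1 - Fx) :=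
            Finset.sum_le_sum hterm
        _ = (Finset.filter (fun j => ¬ j + pn ≤ b) (Finset.Icc a b)).card * (1 - Fx) := by
            rw [Finset.sum_const]; simp
        _ ≤ pn * (1 - Fx) := by
            apply mul_le_mul_of_nonneg_right _ hFb
            exact_mod_cast hcard
    linarith
  linarith

end Main

/-- Abstract peeling induction. -/
lemma prod_peel (g π : ℕ → ℝ) (e : ℝ) (he : 0 ≤ e)
    (hπ0 : ∀ i, 0 ≤ π i) (hπ1 : ∀ i, π i ≤ 1) :
    ∀ M : ℕ, (∀ m < M, π m * g (m + 1) - e ≤ g m) →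
      (∏ i ∈ Finset.range M, π i) * g M - M * e ≤ g 0 := by
  intro M
  induction M with
  | zero => intro _; simp
  | succ M ih =>
    intro hstep
    have h1 : (∏ i ∈ Finset.range M, π i) * g M - M * e ≤ g 0 :=
      ih fun m hm => hstep m (Nat.lt_succ_of_lt hm)
    have hP0 : 0 ≤ ∏ i ∈ Finset.range M, π i := Finset.prod_nonneg fun i _ => hπ0 i
    have hP1 : (∏ i ∈ Finset.range M, π i) ≤ 1 :=
      Finset.prod_le_one (fun i _ => hπ0 i) (fun i _ => hπ1 i)
    have h2 : π M * g (M + 1) - e ≤ g M := hstep M (Nat.lt_succ_self M)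
    have h3 : (∏ i ∈ Finset.range M, π i) * (π M * g (M + 1) - e)
        ≤ (∏ i ∈ Finset.range M, π i) * g M := by
      exact mul_le_mul_of_nonneg_left h2 hP0
    rw [Finset.prod_range_succ]
    push_cast
    nlinarith
  
/-- pointwise: for `0 ≤ s ≤ 1/2`, `exp (-(s + 2 s^2)) ≤ 1 - s`. -/
lemma exp_le_one_sub {s : ℝ} (h0 : 0 ≤ s) (h1 : s ≤ 1/2) :
    Real.exp (-(s + 2 * s ^ 2)) ≤ 1 - s := by
  have h2 : (1 : ℝ) + (s + 2 * s ^ 2) ≤ Real.exp (s + 2 * s ^ 2) := by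
    have := Real.add_one_le_exp (s + 2 * s ^ 2); linarith
  have h3 : (1 : ℝ) ≤ (1 - s) * Real.exp (s + 2 * s ^ 2) := by
    nlinarith [h2, sq_nonneg s]
  have h4 : Real.exp (-(s + 2 * s ^ 2)) = 1 / Real.exp (s + 2 * s ^ 2) := by
    rw [Real.exp_neg]; ring
  rw [h4, div_le_iff₀ (Real.exp_pos _)]
  linarith

/-- product vs exp over a range. -/
lemma exp_le_prod (s : ℕ → ℝ) (M : ℕ) (h : ∀ i < M, 0 ≤ s i ∧ s i ≤ 1/2) :
    Real.exp (-(∑ i ∈ Finset.range M, (s i + 2 * s i ^ 2)))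
      ≤ ∏ i ∈ Finset.range M, (1 - s i) := by
  induction M with
  | zero => simp
  | succ M ih =>
    have hM := h M (Nat.lt_succ_self M)
    have ih' := ih fun i hi => h i (Nat.lt_succ_of_lt hi)
    rw [Finset.sum_range_succ, Finset.prod_range_succ, neg_add, Real.exp_add]
    have h1 : Real.exp (-(s M + 2 * s M ^ 2)) ≤ 1 - s M := exp_le_one_sub hM.1 hM.2
    have h2 : (0:ℝ) ≤ Real.exp (-(∑ i ∈ Finset.range M, (s i + 2 * s i ^ 2))) :=
      (Real.exp_pos _).le
    have h3 : (0:ℝ) ≤ 1 - s M := by linarith [hM.2]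
    exact mul_le_mul ih' h1 (Real.exp_pos _).le (Finset.prod_nonneg fun i _ => by
      have := h i (Finset.mem_range.1 (by simpa using Finset.mem_range.2 (Nat.lt_succ_of_lt (Finset.mem_range.1 ‹i ∈ Finset.range M›))))
      linarith [this.2])

lemma sum_blocks (t : ℕ → ℝ) (r K : ℕ) :
    ∑ i ∈ Finset.range K, ∑ j ∈ Finset.Ioc (i * r) ((i + 1) * r), t j
      = ∑ j ∈ Finset.Ioc 0 (K * r), t j := by
  induction K with
  | zero => simp
  | succ K ih =>
    rw [Finset.sum_range_succ, ih, Finset.sum_Ioc_consecutive]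
    · exact Nat.zero_le _
    · exact Nat.mul_le_mul_right r (Nat.le_succ K)

section MainBound
set_option linter.unusedSectionVars false
variable {Ω : Type*} [MeasurableSpace Ω] (P : Measure Ω) [IsProbabilityMeasure P]
variable (X : ℕ → Ω → ℝ)

set_option maxHeartbeats 1600000 in
/-- The main deterministic (fixed `n`) lower bound. -/
lemma main_bound (hmeas : ∀ i, Measurable (X i)) {x Fx : ℝ}
    (hFx : ∀ i, 1 ≤ i → pr P {ω | X i ω ≤ x} = Fx)
    (n r qn pn : ℕ) (αn : ℝ)
    (hbd' : ∀ a b c : ℕ, 1 ≤ a → a ≤ b → b + qn + 1 ≤ c → c ≤ n →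
      qn ≤ b + 1 - a → qn ≤ c - (b + qn) →
      |pr P (allLe X (Set.Icc a b ∪ Set.Icc (b + qn + 1) c) x) -
        pr P (allLe X (Set.Icc a b) x) * pr P (allLe X (Set.Icc (b + qn + 1) c) x)| ≤ αn)
    (hq1 : 1 ≤ qn) (hp1 : 1 ≤ pn) (h2q : 2 * qn ≤ r) (hk2 : 2 ≤ n / r)
    (hsmall : ((r : ℝ) + pn) * (1 - Fx) ≤ 1 / 2) :
    Real.exp (-(∑ j ∈ Finset.Icc 1 n,
        pr P ({ω | x < X j ω} ∩ allLe X (Set.Icc (j + 1) (j + pn)) x)))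
      - (((n / r : ℕ) : ℝ) * (αn + qn * (1 - Fx)) + 2 * r * (1 - Fx)
          + (((n / r : ℕ) : ℝ) * pn * (1 - Fx)
            + 2 * (((r : ℝ) + pn) * (1 - Fx)) * ((n : ℝ) * (1 - Fx)
              + ((n / r : ℕ) : ℝ) * pn * (1 - Fx))))
      ≤ pr P (allLe X (Set.Icc 1 n) x) := by
  have hr1 : 1 ≤ r := by omega
  set k := n / r with hk
  have hkr : k * r ≤ n := Nat.div_mul_le_self n r
  have hkr2 : n < (k + 1) * r := by
    have h := (Nat.div_lt_iff_lt_mul (show 0 < r by omega)).1 (show n / r < k + 1 by omega)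
    omega
  set Fb : ℝ := 1 - Fx with hFbar
  have hFb0 : 0 ≤ Fb := by
    have := pr_le_one P {ω | X 1 ω ≤ x}
    rw [hFx 1 le_rfl] at this; simp [hFbar]; linarith
  set t : ℕ → ℝ := fun j => pr P ({ω | x < X j ω} ∩ allLe X (Set.Icc (j + 1) (j + pn)) x)
    with ht
  have ht0 : ∀ j, 0 ≤ t j := fun j => pr_nonneg P _
  have htF : ∀ j, 1 ≤ j → t j ≤ Fb := by
    intro j hj
    calc t j ≤ pr P {ω | x < X j ω} := pr_mono P Set.inter_subset_left
      _ = Fb := by rw [pr_exceed P X hmeas j x, hFx j hj]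
  set g : ℕ → ℝ := fun m => pr P (allLe X (Set.Icc (m * r + 1) n) x) with hg
  set π : ℕ → ℝ := fun i => pr P (allLe X (Set.Icc (i * r + 1) ((i + 1) * r - qn)) x) with hπ
  set K := k - 1 with hK
  -- nonnegativity of αn
  have hrn : 2 * r ≤ n := le_trans (Nat.mul_le_mul_right r hk2) hkr
  have hα0 : 0 ≤ αn := by
    have h := hbd' 1 (r - qn) n le_rfl (by omega) (by omega) le_rfl (by omega) (by omega)
    exact le_trans (abs_nonneg _) h
  have he0 : 0 ≤ αn + qn * Fb :=
    add_nonneg hα0 (mul_nonneg (Nat.cast_nonneg qn) hFb0)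
  -- the peel
  have hpeel : (∏ i ∈ Finset.range K, π i) * g K - K * (αn + qn * Fb) ≤ g 0 := by
    refine prod_peel g π (αn + qn * Fb) he0 (fun i => pr_nonneg P _) (fun i => pr_le_one P _) K
      (fun m hm => ?_)
    refine peel_step P X hmeas hFx n r qn αn hbd' hq1 h2q m ?_
    have h1 : (m + 1) * r + r = (m + 2) * r := by ring
    have h2 : (m + 2) * r ≤ k * r := Nat.mul_le_mul_right r (by omega)
    omega
  have hg0 : g 0 = pr P (allLe X (Set.Icc 1 n) x) := by simp [hg]
  -- remainder bound
  have hrem : 1 - 2 * r * Fb ≤ g K := by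
    have h1 : pr P (allLe X (Set.Icc (K * r + 1) n) x)ᶜ ≤ ((n + 1 - (K * r + 1) : ℕ) : ℝ) * Fb :=
      compl_allLe_le P X hmeas hFx (K * r + 1) n (by omega)
    have hcompl : pr P (allLe X (Set.Icc (K * r + 1) n) x)ᶜ
        = 1 - pr P (allLe X (Set.Icc (K * r + 1) n) x) :=
      pr_compl P (allLe_measurable X hmeas _ _)
    have hcard : ((n + 1 - (K * r + 1) : ℕ) : ℝ) ≤ 2 * r := by
      have h2 : K * r + 2 * r = (K + 2) * r := by ring
      have h3 : (k + 1) * r ≤ (K + 2) * r := Nat.mul_le_mul_right r (by omega)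
      have h4 : (n + 1 - (K * r + 1) : ℕ) ≤ 2 * r := by omega
      exact_mod_cast Nat.cast_le.2 h4
    have h5 : ((n + 1 - (K * r + 1) : ℕ) : ℝ) * Fb ≤ 2 * r * Fb :=
      mul_le_mul_of_nonneg_right hcard hFb0
    rw [hcompl] at h1
    simp only [hg]
    linarith
  -- block lower bounds
  set s : ℕ → ℝ := fun i =>
    (∑ j ∈ Finset.Icc (i * r + 1) ((i + 1) * r - qn), t j) + pn * Fb with hs
  have hblock : ∀ i, 1 - s i ≤ π i := fun i =>
    block_lower P X hmeas hFx pn (i * r + 1) ((i + 1) * r - qn) (by omega)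
  have hs0 : ∀ i, 0 ≤ s i := by
    intro i
    simp only [hs]
    exact add_nonneg (Finset.sum_nonneg fun j _ => ht0 j)
      (mul_nonneg (Nat.cast_nonneg pn) hFb0)
  have hsle : ∀ i, s i ≤ ((r : ℝ) + pn) * Fb := by
    intro i
    have hcard : ((Finset.Icc (i * r + 1) ((i + 1) * r - qn)).card : ℝ) ≤ r := by
      rw [Nat.card_Icc]
      have h1 : (i + 1) * r = i * r + r := by ring
      have h2 : (i + 1) * r - qn + 1 - (i * r + 1) ≤ r := by omega
      exact_mod_cast Nat.cast_le.2 h2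
    have h3 : ∑ j ∈ Finset.Icc (i * r + 1) ((i + 1) * r - qn), t j
        ≤ ((Finset.Icc (i * r + 1) ((i + 1) * r - qn)).card : ℝ) * Fb := by
      calc _ ≤ ∑ j ∈ Finset.Icc (i * r + 1) ((i + 1) * r - qn), Fb :=
            Finset.sum_le_sum fun j hj => htF j (by
              have := (Finset.mem_Icc.1 hj).1; omega)
        _ = _ := by rw [Finset.sum_const]; simp [mul_comm]
    have h4 : ∑ j ∈ Finset.Icc (i * r + 1) ((i + 1) * r - qn), t j ≤ (r : ℝ) * Fb :=
      h3.trans (mul_le_mul_of_nonneg_right hcard hFb0)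
    simp only [hs]
    have hring : ((r : ℝ) + pn) * Fb = r * Fb + pn * Fb := by ring
    linarith
  have hshalf : ∀ i, s i ≤ 1 / 2 := fun i => (hsle i).trans hsmall
  -- product comparison
  have hprod1 : ∏ i ∈ Finset.range K, (1 - s i) ≤ ∏ i ∈ Finset.range K, π i := by
    refine Finset.prod_le_prod (fun i _ => ?_) (fun i _ => hblock i)
    have hh := hshalf i
    show (0:ℝ) ≤ 1 - s i
    exact sub_nonneg.2 (le_trans hh (by norm_num))
  have hprod2 : Real.exp (-(∑ i ∈ Finset.range K, (s i + 2 * s i ^ 2)))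
      ≤ ∏ i ∈ Finset.range K, (1 - s i) :=
    exp_le_prod s K (fun i _ => ⟨hs0 i, hshalf i⟩)
  -- sum comparison
  set S : ℝ := ∑ j ∈ Finset.Icc 1 n, t j with hS
  have hS0 : 0 ≤ S := Finset.sum_nonneg fun j _ => ht0 j
  have hSnF : S ≤ (n : ℝ) * Fb := by
    calc S ≤ ∑ j ∈ Finset.Icc 1 n, Fb :=
        Finset.sum_le_sum fun j hj => htF j (Finset.mem_Icc.1 hj).1
      _ = (n : ℝ) * Fb := by rw [Finset.sum_const, Nat.card_Icc]; simp [mul_comm]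
  have hSblocks : ∑ i ∈ Finset.range K, ∑ j ∈ Finset.Icc (i * r + 1) ((i + 1) * r - qn), t j
      ≤ S := by
    have h1 : ∀ i, ∑ j ∈ Finset.Icc (i * r + 1) ((i + 1) * r - qn), t j
        ≤ ∑ j ∈ Finset.Ioc (i * r) ((i + 1) * r), t j := by
      intro i
      refine Finset.sum_le_sum_of_subset_of_nonneg ?_ (fun j _ _ => ht0 j)
      intro j hj
      have := Finset.mem_Icc.1 hj
      have h2 : (i + 1) * r = i * r + r := by ring
      exact Finset.mem_Ioc.2 (by omega)
    calc _ ≤ ∑ i ∈ Finset.range K, ∑ j ∈ Finset.Ioc (i * r) ((i + 1) * r), t j :=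
          Finset.sum_le_sum fun i _ => h1 i
      _ = ∑ j ∈ Finset.Ioc 0 (K * r), t j := sum_blocks t r K
      _ ≤ ∑ j ∈ Finset.Ioc 0 n, t j := by
          refine Finset.sum_le_sum_of_subset_of_nonneg ?_ (fun j _ _ => ht0 j)
          refine Finset.Ioc_subset_Ioc le_rfl ?_
          have : K * r ≤ k * r := Nat.mul_le_mul_right r (by omega)
          omega
      _ = S := by
          rw [hS]
          refine Finset.sum_congr ?_ (fun _ _ => rfl)
          ext j; simp [Nat.lt_iff_add_one_le]
  have hSs : ∑ i ∈ Finset.range K, s i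
      ≤ S + (K : ℝ) * pn * Fb := by
    simp only [hs]
    rw [Finset.sum_add_distrib, Finset.sum_const, Finset.card_range, nsmul_eq_mul]
    have := hSblocks
    linarith
  set ε : ℝ := ((r : ℝ) + pn) * Fb with hε
  have hε0 : 0 ≤ ε := mul_nonneg (by positivity) hFb0
  have hnF0 : 0 ≤ (n : ℝ) * Fb := mul_nonneg (Nat.cast_nonneg n) hFb0
  have hKpF0 : 0 ≤ (K : ℝ) * pn * Fb :=
    mul_nonneg (mul_nonneg (Nat.cast_nonneg K) (Nat.cast_nonneg pn)) hFb0
  have hSsq : ∑ i ∈ Finset.range K, (s i + 2 * s i ^ 2)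
      ≤ (∑ i ∈ Finset.range K, s i) + 2 * ε * (∑ i ∈ Finset.range K, s i) := by
    rw [Finset.mul_sum, ← Finset.sum_add_distrib]
    refine Finset.sum_le_sum fun i _ => ?_
    have h1 : s i ^ 2 ≤ ε * s i := by
      have := hsle i
      nlinarith [hs0 i]
    linarith
  have hSs2 : ∑ i ∈ Finset.range K, s i ≤ (n : ℝ) * Fb + (K : ℝ) * pn * Fb := by
    have := hSs; linarith
  set D : ℝ := (K : ℝ) * pn * Fb + 2 * ε * ((n : ℝ) * Fb + (K : ℝ) * pn * Fb) with hD
  have hD0 : 0 ≤ D :=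
    add_nonneg hKpF0 (mul_nonneg (mul_nonneg two_pos.le hε0) (add_nonneg hnF0 hKpF0))
  have hexp : Real.exp (-(S + D)) ≤ Real.exp (-(∑ i ∈ Finset.range K, (s i + 2 * s i ^ 2))) := by
    apply Real.exp_le_exp.2
    have h1 : ∑ i ∈ Finset.range K, (s i + 2 * s i ^ 2) ≤ S + D := by
      have h2 : 2 * ε * (∑ i ∈ Finset.range K, s i) ≤ 2 * ε * ((n : ℝ) * Fb + (K : ℝ) * pn * Fb) :=
        mul_le_mul_of_nonneg_left hSs2 (mul_nonneg two_pos.le hε0)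
      simp only [hD]
      linarith
    linarith
  have hexpD : Real.exp (-S) - D ≤ Real.exp (-(S + D)) := by
    have h1 : Real.exp (-(S + D)) = Real.exp (-S) * Real.exp (-D) := by
      rw [← Real.exp_add]; ring_nf
    have h2 : 1 - D ≤ Real.exp (-D) := by
      have := Real.add_one_le_exp (-D); linarith
    have h3 : Real.exp (-S) ≤ 1 := Real.exp_le_one_iff.2 (by linarith)
    have h4 : Real.exp (-S) * (1 - D) ≤ Real.exp (-S) * Real.exp (-D) :=
      mul_le_mul_of_nonneg_left h2 (Real.exp_pos _).le
    have h5 : Real.exp (-S) * D ≤ D := mul_le_of_le_one_left hD0 h3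
    have h6 : Real.exp (-S) * (1 - D) = Real.exp (-S) - Real.exp (-S) * D := by ring
    linarith
  -- combine everything
  have hP0 : 0 ≤ ∏ i ∈ Finset.range K, π i := Finset.prod_nonneg fun i _ => pr_nonneg P _
  have hP1 : (∏ i ∈ Finset.range K, π i) ≤ 1 :=
    Finset.prod_le_one (fun i _ => pr_nonneg P _) (fun i _ => pr_le_one P _)
  have hrF : 0 ≤ 2 * (r : ℝ) * Fb := mul_nonneg (by positivity) hFb0
  have hrF1 : 2 * (r : ℝ) * Fb ≤ 1 := by
    have : (r : ℝ) * Fb ≤ ((r : ℝ) + pn) * Fb := by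
      apply mul_le_mul_of_nonneg_right _ hFb0
      have : (0:ℝ) ≤ pn := Nat.cast_nonneg pn
      linarith
    linarith [hsmall]
  have hfinal1 : (∏ i ∈ Finset.range K, π i) - 2 * r * Fb - (K : ℝ) * (αn + qn * Fb)
      ≤ g 0 := by
    have h1 : (∏ i ∈ Finset.range K, π i) * (1 - 2 * r * Fb)
        ≤ (∏ i ∈ Finset.range K, π i) * g K :=
      mul_le_mul_of_nonneg_left hrem hP0
    have h2 : (∏ i ∈ Finset.range K, π i) * (2 * r * Fb) ≤ 2 * r * Fb :=
      mul_le_of_le_one_left hrF hP1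
    have h3 : (∏ i ∈ Finset.range K, π i) * (1 - 2 * r * Fb)
        = (∏ i ∈ Finset.range K, π i) - (∏ i ∈ Finset.range K, π i) * (2 * r * Fb) := by ring
    linarith
  have hfinal2 : Real.exp (-S) - D ≤ ∏ i ∈ Finset.range K, π i :=
    le_trans (le_trans hexpD hexp) (le_trans hprod2 hprod1)
  have hKk : (K : ℝ) ≤ (k : ℝ) := Nat.cast_le.2 (by omega)
  have hlast : (K : ℝ) * (αn + qn * Fb) ≤ (k : ℝ) * (αn + qn * Fb) :=
    mul_le_mul_of_nonneg_right hKk he0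
  have hDk : D ≤ (k : ℝ) * pn * Fb + 2 * ε * ((n : ℝ) * Fb + (k : ℝ) * pn * Fb) := by
    simp only [hD]
    have h1 : (K : ℝ) * pn * Fb ≤ (k : ℝ) * pn * Fb := by
      apply mul_le_mul_of_nonneg_right _ hFb0
      exact mul_le_mul_of_nonneg_right hKk (Nat.cast_nonneg pn)
    have h2 : 2 * ε * ((n : ℝ) * Fb + (K : ℝ) * pn * Fb)
        ≤ 2 * ε * ((n : ℝ) * Fb + (k : ℝ) * pn * Fb) := by
      apply mul_le_mul_of_nonneg_left _ (mul_nonneg two_pos.le hε0)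
      linarith
    linarith
  rw [← hg0]
  linarith

end MainBound


set_option maxHeartbeats 1600000 in
/-- under AIM(xₙ), `n·F̄(xₙ) → τ > 0`, and `pₙ = o(n)`,
`n·αₙ = o(pₙ)`, `qₙ = o(pₙ)`:
`liminf_{n→∞} [P(Mₙ ≤ xₙ) − exp{−∑_{j=1}^n P(X_j > xₙ, M_{j,j+pₙ} ≤ xₙ)}] ≥ 0`. -/
theorem stmt17 {Ω : Type*} [MeasurableSpace Ω] (P : Measure Ω) [IsProbabilityMeasure P]
    (X : ℕ → Ω → ℝ) (F : ℝ → ℝ) (xs : ℕ → ℝ) (q : ℕ → ℕ) (α : ℕ → ℝ) (p : ℕ → ℕ)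
    (τ : ℝ) (hτ : 0 < τ)
    (hmeas : ∀ i, Measurable (X i))
    (hF : ∀ i, 1 ≤ i → ∀ t : ℝ, pr P {ω | X i ω ≤ t} = F t)
    (hqpos : ∀ m, 1 ≤ q m)
    (hq : (fun n : ℕ => (q n : ℝ)) =o[atTop] (fun n : ℕ => (n : ℝ)))
    (hα : Tendsto α atTop (nhds 0))
    (hbd : AIMBound P X xs q α)
    (hFbar : Tendsto (fun n : ℕ => (n : ℝ) * (1 - F (xs n))) atTop (nhds τ))
    (hppos : ∀ m, 1 ≤ p m)
    (hp : (fun n : ℕ => (p n : ℝ)) =o[atTop] (fun n : ℕ => (n : ℝ)))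
    (hnα : (fun n : ℕ => (n : ℝ) * α n) =o[atTop] (fun n : ℕ => (p n : ℝ)))
    (hqp : (fun n : ℕ => (q n : ℝ)) =o[atTop] (fun n : ℕ => (p n : ℝ))) :
    0 ≤ Filter.liminf (fun n : ℕ =>
      pr P (allLe X (Set.Icc 1 n) (xs n)) -
        Real.exp (-(∑ j ∈ Finset.Icc 1 n,
          pr P ({ω | xs n < X j ω} ∩ allLe X (Set.Icc (j + 1) (j + p n)) (xs n)))))
      atTop := by
  -- notation
  set Fb : ℕ → ℝ := fun n => 1 - F (xs n) with hFbdef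
  have hFb0 : ∀ n, 0 ≤ Fb n := by
    intro n
    have h := pr_le_one P {ω | X 1 ω ≤ xs n}
    rw [hF 1 le_rfl (xs n)] at h
    simp only [hFbdef]; linarith
  -- the block length
  set r : ℕ → ℕ := fun n => p n * (Nat.sqrt (n / p n) + 1) with hrdef
  have hr1 : ∀ n, 1 ≤ r n := fun n => Nat.mul_pos (hppos n) (Nat.succ_pos _)
  have hrp : ∀ n, p n ≤ r n := fun n =>
    Nat.le_mul_of_pos_right (p n) (Nat.succ_pos _)
  -- `n / p n → ∞`
  have hnp : Tendsto (fun n => n / p n) atTop atTop := by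
    refine tendsto_atTop.2 fun N => ?_
    have h := (hp.def (show (0:ℝ) < 1 / (N + 1) by positivity)).and (eventually_ge_atTop 1)
    filter_upwards [h] with n hn
    have h1 : (p n : ℝ) ≤ 1 / (N + 1) * n := by
      have := hn.1
      rwa [Real.norm_natCast, Real.norm_natCast] at this
    have h2 : (N : ℝ) * p n ≤ n := by
      have hN : (0:ℝ) < (N:ℝ) + 1 := by positivity
      rw [div_mul_eq_mul_div, le_div_iff₀ hN] at h1
      nlinarith [(Nat.cast_nonneg (p n) : (0:ℝ) ≤ p n), (Nat.cast_nonneg n : (0:ℝ) ≤ n)]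
    have h3 : N * p n ≤ n := by exact_mod_cast h2
    exact (Nat.le_div_iff_mul_le (hppos n)).2 h3
  -- `Nat.sqrt (n / p n) → ∞`
  have hsq : Tendsto (fun n => Nat.sqrt (n / p n)) atTop atTop := by
    refine tendsto_atTop.2 fun N => ?_
    filter_upwards [hnp.eventually (eventually_ge_atTop (N * N))] with n hn
    exact Nat.le_sqrt.2 hn
  -- `p/r → 0`
  have hpr : Tendsto (fun n => (p n : ℝ) / r n) atTop (nhds 0) := by
    have h1 : Tendsto (fun n => ((Nat.sqrt (n / p n) + 1 : ℕ) : ℝ)) atTop atTop :=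
      tendsto_natCast_atTop_atTop.comp (tendsto_atTop_mono (fun n => Nat.le_succ _) hsq)
    have h2 := h1.inv_tendsto_atTop
    refine h2.congr fun n => ?_
    have hp0 : (p n : ℝ) ≠ 0 := by
      have := hppos n; positivity
    simp only [hrdef, Pi.inv_apply]
    push_cast
    field_simp
  -- `q/r → 0`
  have hqr : Tendsto (fun n => (q n : ℝ) / r n) atTop (nhds 0) := by
    have h1 := (hqp.tendsto_div_nhds_zero).mul hpr
    rw [mul_zero] at h1
    refine h1.congr fun n => ?_
    have hp0 : (p n : ℝ) ≠ 0 := by have := hppos n; positivity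
    have hr0 : (r n : ℝ) ≠ 0 := by have := hr1 n; positivity
    field_simp
  -- `r/n → 0`
  have hrn : Tendsto (fun n => (r n : ℝ) / n) atTop (nhds 0) := by
    have hlim : Tendsto (fun n => Real.sqrt ((p n : ℝ) / n) + (p n : ℝ) / n) atTop (nhds 0) := by
      have h1 : Tendsto (fun n => (p n : ℝ) / n) atTop (nhds 0) := hp.tendsto_div_nhds_zero
      have h2 := h1.sqrt
      rw [Real.sqrt_zero] at h2
      simpa using h2.add h1
    refine tendsto_of_tendsto_of_tendsto_of_le_of_le' tendsto_const_nhds hlim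
      (Eventually.of_forall fun n => by positivity) ?_
    filter_upwards [eventually_ge_atTop 1] with n hn1
    have hn0 : (0:ℝ) < n := by exact_mod_cast hn1
    have hpn0 : (0:ℝ) < p n := by exact_mod_cast hppos n
    set s := Nat.sqrt (n / p n)
    -- s ≤ √(n/p)
    have hs1 : (s : ℝ) ≤ Real.sqrt ((n : ℝ) / p n) := by
      rw [Real.le_sqrt (Nat.cast_nonneg s) (by positivity)]
      calc ((s : ℝ)) ^ 2 ≤ ((n / p n : ℕ) : ℝ) := by exact_mod_cast Nat.sqrt_le' (n / p n)
        _ ≤ (n : ℝ) / p n := Nat.cast_div_le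
    -- p * √(n/p) = √(p*n)
    have he1 : (p n : ℝ) * Real.sqrt ((n : ℝ) / p n) = Real.sqrt ((p n : ℝ) * n) := by
      rw [← Real.sqrt_sq hpn0.le, ← Real.sqrt_mul (by positivity)]
      congr 1
      field_simp
      ring
      rw [Real.sq_sqrt (by positivity)]
    -- √(p*n)/n = √(p/n)
    have he2 : Real.sqrt ((p n : ℝ) * n) / n = Real.sqrt ((p n : ℝ) / n) := by
      rw [show (p n : ℝ) / n = ((p n : ℝ) * n) / (n : ℝ) ^ 2 by field_simp,
        Real.sqrt_div (by positivity), Real.sqrt_sq hn0.le]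
    have hrval : (r n : ℝ) = (p n : ℝ) * s + p n := by
      simp only [hrdef]; push_cast; ring
    have h3 : (p n : ℝ) * s ≤ Real.sqrt ((p n : ℝ) * n) := by
      rw [← he1]
      exact mul_le_mul_of_nonneg_left hs1 hpn0.le
    rw [hrval]
    rw [add_div]
    gcongr
    rw [← he2]
    gcongr
  -- `n * Fb n → τ`
  have hCτ : Tendsto (fun n : ℕ => (n : ℝ) * Fb n) atTop (nhds τ) := hFbar
  -- K := n / r n ; basic bound (K:ℝ) ≤ n / r
  have hK : ∀ n, ((n / r n : ℕ) : ℝ) ≤ (n : ℝ) / r n := fun n => Nat.cast_div_le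
  have hr0R : ∀ n, (0:ℝ) < r n := fun n => by have := hr1 n; positivity
  -- T1 : K * α → 0
  have hOpr : (fun n : ℕ => (p n : ℝ)) =O[atTop] (fun n : ℕ => (r n : ℝ)) := by
    refine Asymptotics.isBigO_of_le _ fun n => ?_
    rw [Real.norm_natCast, Real.norm_natCast]
    exact_mod_cast hrp n
  have hnαr : Tendsto (fun n : ℕ => (n : ℝ) * α n / r n) atTop (nhds 0) :=
    (hnα.trans_isBigO hOpr).tendsto_div_nhds_zero
  have hnαr' : Tendsto (fun n : ℕ => |(n : ℝ) * α n / r n|) atTop (nhds 0) := by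
    have h := hnαr.abs; rwa [abs_zero] at h
  have T1 : Tendsto (fun n => ((n / r n : ℕ) : ℝ) * α n) atTop (nhds 0) := by
    refine squeeze_zero_norm (fun n => ?_) hnαr'
    have h1 : ‖((n / r n : ℕ) : ℝ) * α n‖ = ((n / r n : ℕ) : ℝ) * ‖α n‖ := by
      rw [norm_mul, Real.norm_natCast]
    rw [h1]
    have h2 : ((n / r n : ℕ) : ℝ) * ‖α n‖ ≤ ((n : ℝ) / r n) * ‖α n‖ :=
      mul_le_mul_of_nonneg_right (hK n) (norm_nonneg _)
    calc ((n / r n : ℕ) : ℝ) * ‖α n‖ ≤ ((n : ℝ) / r n) * ‖α n‖ := h2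
      _ ≤ |(n : ℝ) * α n / r n| := by
          rw [abs_div, abs_mul, Nat.abs_cast, Nat.abs_cast, Real.norm_eq_abs]
          exact le_of_eq (by ring)
  -- helper: K * (c n) * Fb n → 0 when (c/r) * (n Fb) → 0 pattern
  have T2 : Tendsto (fun n => ((n / r n : ℕ) : ℝ) * ((q n : ℝ) * Fb n)) atTop (nhds 0) := by
    have hg : Tendsto (fun n => ((q n : ℝ) / r n) * ((n : ℝ) * Fb n)) atTop (nhds 0) := by
      have := hqr.mul hCτ; rwa [zero_mul] at this
    have hg' : Tendsto (fun n => |((q n : ℝ) / r n) * ((n : ℝ) * Fb n)|) atTop (nhds 0) := by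
      have h := hg.abs; rwa [abs_zero] at h
    refine squeeze_zero_norm (fun n => ?_) hg'
    have h0 : 0 ≤ ((n / r n : ℕ) : ℝ) * ((q n : ℝ) * Fb n) := by
      have := hFb0 n; positivity
    rw [Real.norm_of_nonneg h0]
    have h2 : ((n / r n : ℕ) : ℝ) * ((q n : ℝ) * Fb n) ≤ ((n : ℝ) / r n) * ((q n : ℝ) * Fb n) :=
      mul_le_mul_of_nonneg_right (hK n) (by have := hFb0 n; positivity)
    calc _ ≤ ((n : ℝ) / r n) * ((q n : ℝ) * Fb n) := h2
      _ = ((q n : ℝ) / r n) * ((n : ℝ) * Fb n) := by ring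
      _ ≤ |((q n : ℝ) / r n) * ((n : ℝ) * Fb n)| := le_abs_self _
  have T4 : Tendsto (fun n => ((n / r n : ℕ) : ℝ) * ((p n : ℝ) * Fb n)) atTop (nhds 0) := by
    have hg : Tendsto (fun n => ((p n : ℝ) / r n) * ((n : ℝ) * Fb n)) atTop (nhds 0) := by
      have := hpr.mul hCτ; rwa [zero_mul] at this
    have hg' : Tendsto (fun n => |((p n : ℝ) / r n) * ((n : ℝ) * Fb n)|) atTop (nhds 0) := by
      have h := hg.abs; rwa [abs_zero] at h
    refine squeeze_zero_norm (fun n => ?_) hg'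
    have h0 : 0 ≤ ((n / r n : ℕ) : ℝ) * ((p n : ℝ) * Fb n) := by
      have := hFb0 n; positivity
    rw [Real.norm_of_nonneg h0]
    have h2 : ((n / r n : ℕ) : ℝ) * ((p n : ℝ) * Fb n) ≤ ((n : ℝ) / r n) * ((p n : ℝ) * Fb n) :=
      mul_le_mul_of_nonneg_right (hK n) (by have := hFb0 n; positivity)
    calc _ ≤ ((n : ℝ) / r n) * ((p n : ℝ) * Fb n) := h2
      _ = ((p n : ℝ) / r n) * ((n : ℝ) * Fb n) := by ring
      _ ≤ |((p n : ℝ) / r n) * ((n : ℝ) * Fb n)| := le_abs_self _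
  -- T3 : r * Fb → 0
  have T3 : Tendsto (fun n => (r n : ℝ) * Fb n) atTop (nhds 0) := by
    have hg : Tendsto (fun n => ((r n : ℝ) / n) * ((n : ℝ) * Fb n)) atTop (nhds 0) := by
      have := hrn.mul hCτ; rwa [zero_mul] at this
    refine hg.congr' ?_
    filter_upwards [eventually_ge_atTop 1] with n hn1
    have hn0 : (n : ℝ) ≠ 0 := by
      have : (1:ℝ) ≤ n := by exact_mod_cast hn1
      linarith
    field_simp
  -- Tp : p * Fb → 0
  have T3' : Tendsto (fun n => |(r n : ℝ) * Fb n|) atTop (nhds 0) := by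
    have h := T3.abs; rwa [abs_zero] at h
  have Tp : Tendsto (fun n => (p n : ℝ) * Fb n) atTop (nhds 0) := by
    refine squeeze_zero_norm (fun n => ?_) T3'
    have h0 : 0 ≤ (p n : ℝ) * Fb n := by have := hFb0 n; positivity
    rw [Real.norm_of_nonneg h0]
    calc (p n : ℝ) * Fb n ≤ (r n : ℝ) * Fb n := by
          apply mul_le_mul_of_nonneg_right _ (hFb0 n)
          exact_mod_cast hrp n
      _ ≤ |(r n : ℝ) * Fb n| := le_abs_self _
  -- T5 : (r + p) * Fb → 0
  have T5 : Tendsto (fun n => ((r n : ℝ) + p n) * Fb n) atTop (nhds 0) := by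
    have := T3.add Tp
    rw [add_zero] at this
    refine this.congr fun n => ?_
    ring
  -- T6 : n Fb + K p Fb → τ
  have T6 : Tendsto (fun n : ℕ => (n : ℝ) * Fb n + ((n / r n : ℕ) : ℝ) * ((p n : ℝ) * Fb n))
      atTop (nhds τ) := by
    have := hCτ.add T4; rwa [add_zero] at this
  -- the total error tends to 0
  set E : ℕ → ℝ := fun n =>
    ((n / r n : ℕ) : ℝ) * (α n + q n * Fb n) + 2 * r n * Fb n
      + (((n / r n : ℕ) : ℝ) * p n * Fb n
        + 2 * (((r n : ℝ) + p n) * Fb n) * ((n : ℝ) * Fb n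
          + ((n / r n : ℕ) : ℝ) * p n * Fb n)) with hEdef
  have hE : Tendsto E atTop (nhds 0) := by
    have hcomb := ((T1.add T2).add (T3.const_mul 2)).add
      (T4.add ((T5.const_mul 2).mul T6))
    simp only [add_zero, zero_add, mul_zero, zero_mul] at hcomb
    refine hcomb.congr fun n => ?_
    simp only [hEdef]
    ring
  -- eventual hypotheses for main_bound
  have hev1 : ∀ᶠ n in atTop, 2 * q n ≤ r n := by
    filter_upwards [hqr.eventually (eventually_le_nhds (show (0:ℝ) < 1/2 by norm_num))]
      with n hn
    have hr0 := hr0R n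
    rw [div_le_iff₀ hr0] at hn
    have : (2 * q n : ℝ) ≤ r n := by linarith
    exact_mod_cast this
  have hev2 : ∀ᶠ n in atTop, 2 ≤ n / r n := by
    filter_upwards [hrn.eventually (eventually_le_nhds (show (0:ℝ) < 1/2 by norm_num)),
      eventually_ge_atTop 1] with n hn hn1
    have hn0 : (0:ℝ) < n := by exact_mod_cast hn1
    rw [div_le_iff₀ hn0] at hn
    have h2 : (2 * r n : ℝ) ≤ n := by linarith
    have h3 : 2 * r n ≤ n := by exact_mod_cast h2
    exact (Nat.le_div_iff_mul_le (hr1 n)).2 (by omega)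
  have hev3 : ∀ᶠ n in atTop, ((r n : ℝ) + p n) * Fb n ≤ 1/2 :=
    T5.eventually (eventually_le_nhds (show (0:ℝ) < 1/2 by norm_num))
  -- the eventual lower bound
  have hmain : ∀ᶠ n in atTop, -E n ≤
      pr P (allLe X (Set.Icc 1 n) (xs n)) -
        Real.exp (-(∑ j ∈ Finset.Icc 1 n,
          pr P ({ω | xs n < X j ω} ∩ allLe X (Set.Icc (j + 1) (j + p n)) (xs n)))) := by
    filter_upwards [hev1, hev2, hev3] with n h1 h2 h3
    have hmb := main_bound P X hmeas (fun i hi => hF i hi (xs n)) n (r n) (q n) (p n) (α n)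
      (hbd n) (hqpos n) (hppos n) h1 h2 h3
    simp only [hEdef]
    linarith
  -- conclude via liminf
  have hnegE : Tendsto (fun n => -E n) atTop (nhds 0) := by
    simpa using hE.neg
  have h0 : Filter.liminf (fun n => -E n) atTop = 0 := hnegE.liminf_eq
  rw [← h0]
  refine Filter.liminf_le_liminf hmain ?_ ?_
  · exact hnegE.isBoundedUnder_ge
  · refine Filter.isCoboundedUnder_ge_of_eventually_le atTop (x := 1)
      (Eventually.of_forall fun n => ?_)
    have hpr1 := pr_le_one P (allLe X (Set.Icc 1 n) (xs n))
    have hexp0 : 0 ≤ Real.exp (-(∑ j ∈ Finset.Icc 1 n,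
        pr P ({ω | xs n < X j ω} ∩ allLe X (Set.Icc (j + 1) (j + p n)) (xs n)))) :=
      (Real.exp_pos _).le
    linarith
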